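/- If for each unit vector u, the projection uᵀX₁ has a continuous distribution function, then the half-space depth function D(x) = inf_{‖u‖=1} P(uᵀX₁ ≥ uᵀx) is continuous on ℝ^d. -/

import Mathlib

open MeasureTheory
open scoped RealInnerProductSpace

open Filter Topology


section aux
variable {d : ℕ} {Ω : Type*} [MeasurableSpace Ω]
  (μ : Measure Ω) [IsProbabilityMeasure μ]
  (X : Ω → EuclideanSpace ℝ (Fin d))

lemma measZ (hX : Measurable X) (u : EuclideanSpace ℝ (Fin d)) :
    Measurable (fun ω => ⟪u, X ω⟫) :=
  (continuous_const.inner continuous_id).measurable.comp hX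

lemma noatom (hX : Measurable X) (u : EuclideanSpace ℝ (Fin d))
    (hc : Continuous (fun w : ℝ => (μ {ω | ⟪u, X ω⟫ ≤ w}).toReal)) (w : ℝ) :
    μ {ω | ⟪u, X ω⟫ = w} = 0 := by
  have hm : Measurable (fun ω => ⟪u, X ω⟫) := measZ X hX u
  set F : ℝ → ℝ := fun w => (μ {ω | ⟪u, X ω⟫ ≤ w}).toReal with hF
  have key : ∀ w' < w, (μ {ω | ⟪u, X ω⟫ = w}).toReal ≤ F w - F w' := by
    intro w' hw'
    have hdisj : Disjoint {ω | ⟪u, X ω⟫ ≤ w'} {ω | ⟪u, X ω⟫ = w} := by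
      apply Set.disjoint_left.2
      intro ω h1 h2
      simp only [Set.mem_setOf_eq] at h1 h2
      rw [h2] at h1; linarith
    have hunion : μ {ω | ⟪u, X ω⟫ ≤ w'} + μ {ω | ⟪u, X ω⟫ = w} ≤ μ {ω | ⟪u, X ω⟫ ≤ w} := by
      rw [← measure_union hdisj (hm (measurableSet_singleton w))]
      apply measure_mono
      rintro ω (h | h) <;> simp only [Set.mem_setOf_eq] at * <;> linarith
    have h1 : (μ {ω | ⟪u, X ω⟫ ≤ w'}).toReal + (μ {ω | ⟪u, X ω⟫ = w}).toReal ≤ F w := by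
      rw [← ENNReal.toReal_add (measure_ne_top μ _) (measure_ne_top μ _)]
      exact ENNReal.toReal_mono (measure_ne_top μ _) hunion
    simp only [hF]; linarith
  have hlim : Tendsto (fun n : ℕ => F w - F (w - 1 / (n + 1))) atTop (𝓝 0) := by
    have h1 : Tendsto (fun n : ℕ => w - 1 / (n + 1)) atTop (𝓝 w) := by
      simpa using (tendsto_const_nhds (x := w) (f := atTop (α := ℕ))).sub
        tendsto_one_div_add_atTop_nhds_zero_nat
    have h2 : Tendsto (fun n : ℕ => F (w - 1 / (n + 1))) atTop (𝓝 (F w)) :=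
      (hc.tendsto w).comp h1
    simpa using (tendsto_const_nhds (x := F w) (f := atTop (α := ℕ))).sub h2
  have hle : (μ {ω | ⟪u, X ω⟫ = w}).toReal ≤ 0 := by
    refine ge_of_tendsto hlim (Eventually.of_forall fun n => ?_)
    refine key _ (sub_lt_self w (by positivity))
  have : (μ {ω | ⟪u, X ω⟫ = w}).toReal = 0 :=
    le_antisymm hle ENNReal.toReal_nonneg
  exact ((ENNReal.toReal_eq_zero_iff _).1 this).resolve_right (measure_ne_top μ _)

lemma cdfrel (hX : Measurable X) (u : EuclideanSpace ℝ (Fin d))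
    (hc : Continuous (fun w : ℝ => (μ {ω | ⟪u, X ω⟫ ≤ w}).toReal)) (w : ℝ) :
    (μ {ω | w ≤ ⟪u, X ω⟫}).toReal = 1 - (μ {ω | ⟪u, X ω⟫ ≤ w}).toReal := by
  have hm : Measurable (fun ω => ⟪u, X ω⟫) := measZ X hX u
  have hna := noatom μ X hX u hc w
  have hlt : μ {ω | ⟪u, X ω⟫ < w} = μ {ω | ⟪u, X ω⟫ ≤ w} := by
    refine le_antisymm (measure_mono (Set.setOf_subset_setOf.2 fun ω h => le_of_lt h)) ?_
    calc μ {ω | ⟪u, X ω⟫ ≤ w} ≤ μ ({ω | ⟪u, X ω⟫ < w} ∪ {ω | ⟪u, X ω⟫ = w}) := by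
          apply measure_mono; intro ω h
          have h' : ⟪u, X ω⟫ ≤ w := h
          rcases lt_or_eq_of_le h' with h | h
          · exact Or.inl h
          · exact Or.inr h
      _ ≤ μ {ω | ⟪u, X ω⟫ < w} + μ {ω | ⟪u, X ω⟫ = w} := measure_union_le _ _
      _ = μ {ω | ⟪u, X ω⟫ < w} := by rw [hna, add_zero]
  have hcompl : {ω | w ≤ ⟪u, X ω⟫} = {ω | ⟪u, X ω⟫ < w}ᶜ := by
    ext ω; simp [not_lt]
  have hms : MeasurableSet {ω | ⟪u, X ω⟫ < w} := hm measurableSet_Iio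
  rw [hcompl, measure_compl hms (measure_ne_top μ _), measure_univ, hlt,
    ENNReal.toReal_sub_of_le prob_le_one ENNReal.one_ne_top, ENNReal.toReal_one]

end aux

section key
variable {d : ℕ} {Ω : Type*} [MeasurableSpace Ω]
  (μ : Measure Ω) [IsProbabilityMeasure μ]
  (X : Ω → EuclideanSpace ℝ (Fin d))

lemma key_liminf (hX : Measurable X)
    (u : ℕ → EuclideanSpace ℝ (Fin d)) (ulim : EuclideanSpace ℝ (Fin d))
    (hconv : Tendsto u atTop (𝓝 ulim))
    (hc : Continuous (fun w : ℝ => (μ {ω | ⟪ulim, X ω⟫ ≤ w}).toReal))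
    (c : ℕ → ℝ) (clim : ℝ) (hcv : Tendsto c atTop (𝓝 clim)) (M : ℝ)
    (hM : ∀ k, (μ {ω | c k ≤ ⟪u k, X ω⟫}).toReal ≤ M) :
    (μ {ω | clim ≤ ⟪ulim, X ω⟫}).toReal ≤ M := by
  have hM0 : (0:ℝ) ≤ M := le_trans ENNReal.toReal_nonneg (hM 0)
  set A : ℕ → Set Ω := fun k => {ω | c k ≤ ⟪u k, X ω⟫} with hA
  set B : ℕ → Set Ω := fun N => ⋂ k, ⋂ (_ : N ≤ k), A k with hB
  have hBmono : Monotone B := by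
    intro N N' hN
    exact Set.iInter₂_mono' fun k hk => ⟨k, le_trans hN hk, le_rfl⟩
  have hsub : {ω | clim < ⟪ulim, X ω⟫} ⊆ ⋃ N, B N := by
    intro ω hω
    have hω' : clim < ⟪ulim, X ω⟫ := hω
    have htd : Tendsto (fun k => ⟪u k, X ω⟫ - c k) atTop (𝓝 (⟪ulim, X ω⟫ - clim)) :=
      (Tendsto.inner hconv (tendsto_const_nhds (x := X ω))).sub hcv
    have hev : ∀ᶠ k in atTop, 0 < ⟪u k, X ω⟫ - c k :=
      htd.eventually (eventually_gt_nhds (by linarith))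
    obtain ⟨N, hN⟩ := eventually_atTop.1 hev
    refine Set.mem_iUnion.2 ⟨N, ?_⟩
    refine Set.mem_iInter₂.2 fun k hk => ?_
    have := hN k hk
    simp only [hA, Set.mem_setOf_eq]
    linarith
  have hBA : ∀ N, μ (B N) ≤ ENNReal.ofReal M := by
    intro N
    calc μ (B N) ≤ μ (A N) := measure_mono (Set.iInter₂_subset N le_rfl)
      _ ≤ ENNReal.ofReal M := by
          rw [ENNReal.le_ofReal_iff_toReal_le (measure_ne_top μ _) hM0]
          exact hM N
  have hlt : μ {ω | clim < ⟪ulim, X ω⟫} ≤ ENNReal.ofReal M := by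
    calc μ {ω | clim < ⟪ulim, X ω⟫} ≤ μ (⋃ N, B N) := measure_mono hsub
      _ = ⨆ N, μ (B N) := Directed.measure_iUnion (hBmono.directed_le)
      _ ≤ ENNReal.ofReal M := iSup_le hBA
  have hle : μ {ω | clim ≤ ⟪ulim, X ω⟫} ≤ ENNReal.ofReal M := by
    calc μ {ω | clim ≤ ⟪ulim, X ω⟫}
        ≤ μ ({ω | clim < ⟪ulim, X ω⟫} ∪ {ω | ⟪ulim, X ω⟫ = clim}) := by
          apply measure_mono; intro ω h
          have h' : clim ≤ ⟪ulim, X ω⟫ := h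
          rcases lt_or_eq_of_le h' with h'' | h''
          · exact Or.inl h''
          · exact Or.inr h''.symm
      _ ≤ μ {ω | clim < ⟪ulim, X ω⟫} + μ {ω | ⟪ulim, X ω⟫ = clim} := measure_union_le _ _
      _ = μ {ω | clim < ⟪ulim, X ω⟫} := by rw [noatom μ X hX ulim hc clim, add_zero]
      _ ≤ ENNReal.ofReal M := hlt
  exact ENNReal.toReal_le_of_le_ofReal hM0 hle

end key

/-- If every projection `uᵀX₁` has a continuous distribution function, then the
half-space depth `D(x) = inf_{‖u‖=1} P(uᵀX₁ ≥ uᵀx)` is continuous on `ℝ^d`. -/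
theorem halfspace_depth_continuous {d : ℕ} (hd : 0 < d) {Ω : Type*} [MeasurableSpace Ω]
    (μ : Measure Ω) [IsProbabilityMeasure μ]
    (X : Ω → EuclideanSpace ℝ (Fin d)) (hX : Measurable X)
    (hcont : ∀ u : EuclideanSpace ℝ (Fin d), ‖u‖ = 1 →
      Continuous (fun w : ℝ => (μ {ω | ⟪u, X ω⟫ ≤ w}).toReal)) :
    Continuous (fun x : EuclideanSpace ℝ (Fin d) =>
      ⨅ u : {u : EuclideanSpace ℝ (Fin d) // ‖u‖ = 1},
        (μ {ω | ⟪u.1, x⟫ ≤ ⟪u.1, X ω⟫}).toReal) := by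
  classical
  haveI : Nonempty {u : EuclideanSpace ℝ (Fin d) // ‖u‖ = 1} :=
    ⟨⟨EuclideanSpace.single (⟨0, hd⟩ : Fin d) (1:ℝ), by
      rw [EuclideanSpace.norm_single]; norm_num⟩⟩
  set g : {u : EuclideanSpace ℝ (Fin d) // ‖u‖ = 1} → EuclideanSpace ℝ (Fin d) → ℝ :=
    fun u x => (μ {ω | ⟪u.1, x⟫ ≤ ⟪u.1, X ω⟫}).toReal with hg
  show Continuous fun x => ⨅ u, g u x
  have hbdd : ∀ x, BddBelow (Set.range fun u => g u x) := by
    intro x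
    exact ⟨0, by rintro r ⟨u, rfl⟩; exact ENNReal.toReal_nonneg⟩
  have hDle : ∀ (x) (u), (⨅ v, g v x) ≤ g u x := fun x u => ciInf_le (hbdd x) u
  have hgcont : ∀ u, Continuous fun x => g u x := by
    intro u
    have h1 : (fun x => g u x)
        = fun x => 1 - (μ {ω | ⟪u.1, X ω⟫ ≤ ⟪u.1, x⟫}).toReal := by
      funext x
      exact cdfrel μ X hX u.1 (hcont u.1 u.2) _
    rw [h1]
    have hi : Continuous fun x : EuclideanSpace ℝ (Fin d) => ⟪u.1, x⟫ :=
      continuous_const.inner continuous_id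
    exact continuous_const.sub ((hcont u.1 u.2).comp hi)
  rw [continuous_iff_seqContinuous]
  intro x p hxp
  show Tendsto (fun n => ⨅ u, g u (x n)) atTop (𝓝 (⨅ u, g u p))
  refine tendsto_order.2 ⟨?_, ?_⟩
  · -- lower bound: ∀ b < D p, eventually b < D (x n)
    intro b hb
    by_contra h
    rw [Filter.not_eventually] at h
    have h' : ∃ᶠ n in atTop, (⨅ u, g u (x n)) ≤ b := h.mono fun n hn => not_lt.1 hn
    obtain ⟨φ, hφ, hφP⟩ := Filter.extraction_of_frequently_atTop h'
    set b' : ℝ := (b + ⨅ u, g u p) / 2 with hb'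
    have hb'1 : b < b' := by rw [hb']; linarith
    have hb'2 : b' < ⨅ u, g u p := by rw [hb']; linarith
    have hlt : ∀ n, (⨅ u, g u (x (φ n))) < b' := fun n => lt_of_le_of_lt (hφP n) hb'1
    choose un hun using fun n => exists_lt_of_ciInf_lt (hlt n)
    have hmem : ∀ n, (un n).1 ∈ Metric.sphere (0 : EuclideanSpace ℝ (Fin d)) 1 :=
      fun n => mem_sphere_zero_iff_norm.2 (un n).2
    obtain ⟨ulim, hulims, ψ, hψ, hψconv⟩ :=
      (isCompact_sphere (0 : EuclideanSpace ℝ (Fin d)) 1).tendsto_subseq hmem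
    have hulim : ‖ulim‖ = 1 := mem_sphere_zero_iff_norm.1 hulims
    have hxconv : Tendsto (fun k => x (φ (ψ k))) atTop (𝓝 p) :=
      hxp.comp ((hφ.comp hψ).tendsto_atTop)
    have hψconv' : Tendsto (fun k => (un (ψ k)).1) atTop (𝓝 ulim) := hψconv
    have hcconv : Tendsto (fun k => ⟪(un (ψ k)).1, x (φ (ψ k))⟫) atTop (𝓝 ⟪ulim, p⟫) :=
      Tendsto.inner hψconv' hxconv
    have hM : ∀ k, (μ {ω | ⟪(un (ψ k)).1, x (φ (ψ k))⟫ ≤ ⟪(un (ψ k)).1, X ω⟫}).toReal ≤ b' :=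
      fun k => (hun (ψ k)).le
    have hkey := key_liminf μ X hX (fun k => (un (ψ k)).1) ulim hψconv' (hcont ulim hulim)
      (fun k => ⟪(un (ψ k)).1, x (φ (ψ k))⟫) ⟪ulim, p⟫ hcconv b' hM
    have hfin : (⨅ u, g u p) ≤ b' := le_trans (hDle p ⟨ulim, hulim⟩) hkey
    linarith
  · -- upper bound
    intro b hb
    obtain ⟨u, hu⟩ := exists_lt_of_ciInf_lt hb
    have htd : Tendsto (fun n => g u (x n)) atTop (𝓝 (g u p)) :=
      ((hgcont u).tendsto p).comp hxp
    have hev := htd.eventually (eventually_lt_nhds hu)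
    exact hev.mono fun n hn => lt_of_le_of_lt (hDle (x n) u) hn
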